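/- In the algebra U(V), for j ≠ i and N ∈ ℕ, the element E_{j,N}^+ defined recursively by E_{j,0}^+ = E_j and E_{j,m+1}^+ = E_i E_{j,m}^+ − (K_i · E_{j,m}^+) E_i satisfies E_{j,N}^+ F_i − F_i E_{j,N}^+ = (N)_{q_{ii}} (q_{ii}^{N−1} q_{ij}q_{ji} − 1) L_i E_{j,N−1}^+. -/
import Mathlib


/-- The q-number `(n)_q = 1 + q + ⋯ + q^{n-1}`. -/
def qNat {k : Type*} [Field k] (q : k) (n : ℕ) : k := ∑ j ∈ Finset.range n, q ^ j

/-- In the algebra `U(V)` with the quantum double relations, for `j ≠ i`, the elements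
`E_{j,N}^+` defined by `E_{j,0}^+ = E_j` and
`E_{j,m+1}^+ = E_i E_{j,m}^+ − (K_i · E_{j,m}^+) E_i`, where the conjugation
`K_i · E_{j,m}^+ = K_i E_{j,m}^+ K_i^{-1} = q_{ij} q_{ii}^m E_{j,m}^+` (as `E_{j,m}^+` has
degree `α_j + m α_i`), satisfy
`E_{j,N}^+ F_i − F_i E_{j,N}^+ = (N)_{q_ii} (q_ii^{N−1} q_{ij} q_{ji} − 1) L_i E_{j,N−1}^+`. -/
theorem Ead_commutator_F {k A : Type*} [Field k] [Ring A] [Algebra k A]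
    (qii qij qji : k) (hqii : qii ≠ 0) (hqji : qji ≠ 0)
    (Ei Ej Fi Ki Li : A) (Ead : ℕ → A)
    (hEad0 : Ead 0 = Ej)
    (hEadS : ∀ m, Ead (m + 1) = Ei * Ead m - (qij * qii ^ m) • (Ead m * Ei))
    (hEiFi : Ei * Fi - Fi * Ei = Ki - Li)
    (hEjFi : Ej * Fi = Fi * Ej)
    (hKiEi : Ki * Ei = qii • (Ei * Ki))
    (hKiEj : Ki * Ej = qij • (Ej * Ki))
    (hLiEi : Li * Ei = qii⁻¹ • (Ei * Li))
    (hLiEj : Li * Ej = qji⁻¹ • (Ej * Li)) :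
    ∀ N : ℕ, 1 ≤ N →
      Ead N * Fi - Fi * Ead N =
        (qNat qii N * (qii ^ (N - 1) * (qij * qji) - 1)) • (Li * Ead (N - 1)) := by
  have hEiLi : Ei * Li = qii • (Li * Ei) := by
    rw [hLiEi, smul_smul, mul_inv_cancel₀ hqii, one_smul]
  have hEjLi : Ej * Li = qji • (Li * Ej) := by
    rw [hLiEj, smul_smul, mul_inv_cancel₀ hqji, one_smul]
  have swapEiLi : ∀ x : A, Ei * (Li * x) = qii • (Li * (Ei * x)) := fun x => by
    rw [← mul_assoc, hEiLi, smul_mul_assoc, mul_assoc]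
  have swapKiEi : ∀ x : A, Ki * (Ei * x) = qii • (Ei * (Ki * x)) := fun x => by
    rw [← mul_assoc, hKiEi, smul_mul_assoc, mul_assoc]
  have swapKiEj : ∀ x : A, Ki * (Ej * x) = qij • (Ej * (Ki * x)) := fun x => by
    rw [← mul_assoc, hKiEj, smul_mul_assoc, mul_assoc]
  have swapEjLi : ∀ x : A, Ej * (Li * x) = qji • (Li * (Ej * x)) := fun x => by
    rw [← mul_assoc, hEjLi, smul_mul_assoc, mul_assoc]
  have hEadSX : ∀ m (x : A), Ead (m + 1) * x
      = Ei * (Ead m * x) - (qij * qii ^ m) • (Ead m * (Ei * x)) := fun m x => by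
    rw [hEadS, sub_mul, smul_mul_assoc, mul_assoc, mul_assoc]
  have swapKiEad : ∀ m (x : A), Ki * (Ead m * x) = (qij * qii ^ m) • (Ead m * (Ki * x)) := by
    intro m
    induction m with
    | zero => intro x; simpa [hEad0] using swapKiEj x
    | succ n ih =>
      intro x
      simp only [hEadSX, mul_sub, mul_smul_comm, swapKiEi, ih, smul_sub, smul_smul]
      match_scalars <;> ring
  have swapEadLi : ∀ m (x : A), Ead m * (Li * x) = (qji * qii ^ m) • (Li * (Ead m * x)) := by
    intro m
    induction m with
    | zero => intro x; simpa [hEad0] using swapEjLi x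
    | succ n ih =>
      intro x
      simp only [hEadSX, mul_sub, mul_smul_comm, swapEiLi, ih, smul_sub, smul_smul]
      match_scalars <;> ring
  have hKiEad : ∀ m, Ki * Ead m = (qij * qii ^ m) • (Ead m * Ki) := fun m => by
    simpa using swapKiEad m 1
  have hEadLi : ∀ m, Ead m * Li = (qji * qii ^ m) • (Li * Ead m) := fun m => by
    simpa using swapEadLi m 1
  have hqNat : ∀ n, qNat qii (n + 1) = 1 + qii * qNat qii n := by
    intro n
    simp [qNat, Finset.sum_range_succ', pow_succ', Finset.mul_sum, add_comm]
  have key : ∀ N, Ead N * Fi - Fi * Ead N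
      = (qNat qii N * (qii ^ (N - 1) * (qij * qji) - 1)) • (Li * Ead (N - 1)) := by
    intro N
    induction N with
    | zero => simp [qNat, hEad0, hEjFi]
    | succ n ih =>
      have hcomm : ∀ x y : A, (x * y) * Fi - Fi * (x * y)
          = x * (y * Fi - Fi * y) + (x * Fi - Fi * x) * y := by
        intro x y; noncomm_ring
      have step : Ead (n + 1) * Fi - Fi * Ead (n + 1)
          = (Ei * (Ead n * Fi - Fi * Ead n) + (Ei * Fi - Fi * Ei) * Ead n)
            - (qij * qii ^ n) • (Ead n * (Ei * Fi - Fi * Ei)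
              + (Ead n * Fi - Fi * Ead n) * Ei) := by
        rw [hEadS n, ← hcomm Ei (Ead n), ← hcomm (Ead n) Ei]
        simp only [sub_mul, mul_sub, smul_mul_assoc, mul_smul_comm, smul_sub]
        abel
      rw [step, ih, hEiFi]
      cases n with
      | zero =>
        have hq0 : qNat qii 0 = 0 := by simp [qNat]
        simp only [hq0, zero_mul, zero_smul, mul_zero, smul_zero, add_zero, zero_add,
          sub_zero, hEad0, pow_zero, one_mul, mul_one, sub_mul, mul_sub, hKiEj, hEjLi,
          smul_smul, Nat.zero_sub, Nat.add_sub_cancel]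
        match_scalars <;> simp [qNat] <;> ring
      | succ m =>
        have hLiEadS : Li * Ead (m + 1)
            = Li * (Ei * Ead m) - (qij * qii ^ m) • (Li * (Ead m * Ei)) := by
          rw [hEadS, mul_sub, mul_smul_comm]
        simp only [Nat.add_sub_cancel] at *
        have hpow : qii ^ m = 1 + qii * qNat qii m - qNat qii m := by
          have h1 : qNat qii (m + 1) = qNat qii m + qii ^ m := by
            simp [qNat, Finset.sum_range_succ]
          linear_combination hqNat m - h1
        simp only [sub_mul, mul_sub, smul_sub, smul_smul, mul_smul_comm, smul_mul_assoc,
          mul_assoc, swapEiLi, hKiEad, hEadLi, hLiEadS]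
        match_scalars <;> (simp only [hqNat, pow_succ, pow_mul, hpow]; ring)
  intro N _
  exact key N
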